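/- For all n ≥ 2, the designs X_n generated by the greedy-packing algorithm satisfy MR(X_n) ≤ 2. -/
import Mathlib


open Metric Set MeasureTheory

/-- Distance from a point `x` to the nearest point of the design `D`. -/
noncomputable def minDist {E : Type*} [NormedAddCommGroup E] (D : Finset E) (x : E) : ℝ :=
  sInf ((fun p => dist x p) '' (D : Set E))

/-- Fill distance (covering radius) of the design `D` for the set `A`:
`CR_A(D) = sup_{x ∈ A} min_{p ∈ D} ‖x - p‖`. -/
noncomputable def fillDist {E : Type*} [NormedAddCommGroup E] (A : Set E) (D : Finset E) : ℝ :=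
  sSup ((fun x => minDist D x) '' A)

/-- Separation radius of the design `D`:
`SR(D) = (1/2) min_{p ≠ q ∈ D} ‖p - q‖`. -/
noncomputable def sepRad {E : Type*} [NormedAddCommGroup E] (D : Finset E) : ℝ :=
  (1 / 2) * sInf ((fun p : E × E => dist p.1 p.2) '' {p | p.1 ∈ D ∧ p.2 ∈ D ∧ p.1 ≠ p.2})

/-- Mesh-ratio of the design `D` for the set `A`: `MR(D) = CR_A(D) / SR(D)`. -/
noncomputable def meshRatio {E : Type*} [NormedAddCommGroup E] (A : Set E) (D : Finset E) : ℝ :=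
  fillDist A D / sepRad D

/-- The nested design consisting of the first `n` points of the sequence `x`. -/
noncomputable def design {E : Type*} (x : ℕ → E) (n : ℕ) : Finset E :=
  letI := Classical.decEq E
  (Finset.range n).image x

lemma mem_design {E : Type*} (x : ℕ → E) {i n : ℕ} (h : i < n) : x i ∈ design x n := by
  classical
  simp only [design]
  exact Finset.mem_image.2 ⟨i, Finset.mem_range.2 h, rfl⟩

lemma minDist_nonneg {E : Type*} [NormedAddCommGroup E] (D : Finset E) (y : E) :
    0 ≤ minDist D y :=
  Real.sInf_nonneg (by rintro r ⟨p, _, rfl⟩; exact dist_nonneg)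

lemma minDist_le {E : Type*} [NormedAddCommGroup E] {D : Finset E} {p : E}
    (hp : p ∈ D) (y : E) : minDist D y ≤ dist y p :=
  csInf_le ⟨0, by rintro r ⟨q, _, rfl⟩; exact dist_nonneg⟩ ⟨p, hp, rfl⟩

lemma minDist_anti {E : Type*} [NormedAddCommGroup E] {D D' : Finset E}
    (h : D ⊆ D') (hD : D.Nonempty) (y : E) : minDist D' y ≤ minDist D y := by
  apply le_csInf
  · obtain ⟨p, hp⟩ := hD; exact ⟨dist y p, p, hp, rfl⟩
  · rintro r ⟨p, hp, rfl⟩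
    exact minDist_le (h hp) y

lemma fillDist_nonneg {E : Type*} [NormedAddCommGroup E] (A : Set E) (D : Finset E) :
    0 ≤ fillDist A D :=
  Real.sSup_nonneg (by rintro r ⟨y, _, rfl⟩; exact minDist_nonneg D y)

/-- For all `n ≥ 2`, the designs `Xₙ` generated by the greedy-packing
algorithm satisfy `MR(Xₙ) ≤ 2`. -/
theorem statement8 {d : ℕ} (hd : 1 ≤ d)
    {E : Type*} [NormedAddCommGroup E] [NormedSpace ℝ E] [FiniteDimensional ℝ E]
    (hdim : Module.finrank ℝ E = d)
    (S : Set E) (hS : IsCompact S)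
    (x : ℕ → E) (hinj : Function.Injective x) (hx0 : x 0 ∈ S)
    (hgreedy : ∀ k : ℕ, 1 ≤ k →
      x k ∈ S ∧ minDist (design x k) (x k) = fillDist S (design x k))
    (n : ℕ) (hn : 2 ≤ n) :
    meshRatio S (design x n) ≤ 2 := by
    classical
  -- S is bounded
  obtain ⟨C, hC⟩ : ∃ C, ∀ y ∈ S, dist y (x 0) ≤ C := by
    rcases (hS.isBounded.subset_ball (x 0)) with ⟨r, hr⟩
    exact ⟨r, fun y hy => le_of_lt (mem_ball.1 (hr hy))⟩
  -- fillDist is monotone decreasing in the design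
  have hfill_mono : ∀ j, 1 ≤ j → j ≤ n → fillDist S (design x n) ≤ fillDist S (design x j) := by
    intro j hj1 hjn
    apply Real.sSup_le
    · rintro r ⟨y, hy, rfl⟩
      have h1 : minDist (design x n) y ≤ minDist (design x j) y :=
        minDist_anti (by
          intro p hp
          classical
          simp only [design, Finset.mem_image, Finset.mem_range] at hp ⊢
          obtain ⟨i, hi, rfl⟩ := hp
          exact ⟨i, lt_of_lt_of_le hi hjn, rfl⟩)
          ⟨x 0, mem_design x (by omega)⟩ y
      have h2 : minDist (design x j) y ≤ fillDist S (design x j) := by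
        apply le_csSup
        · refine ⟨C, ?_⟩
          rintro r ⟨z, hz, rfl⟩
          exact le_trans (minDist_le (mem_design x (by omega)) z) (hC z hz)
        · exact ⟨y, hy, rfl⟩
      exact h1.trans h2
    · exact fillDist_nonneg S _
  set F := fillDist S (design x n) with hF
  -- key: distinct points of the design are at distance ≥ F
  have hkey : ∀ i j, i < j → j < n → F ≤ dist (x i) (x j) := by
    intro i j hij hjn
    have hj1 : 1 ≤ j := by omega
    have h1 : F ≤ fillDist S (design x j) := hfill_mono j hj1 (by omega)
    have h2 : fillDist S (design x j) = minDist (design x j) (x j) :=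
      ((hgreedy j hj1).2).symm
    have h3 : minDist (design x j) (x j) ≤ dist (x j) (x i) :=
      minDist_le (mem_design x hij) (x j)
    rw [dist_comm]
    calc F ≤ _ := h1
    _ = _ := h2
    _ ≤ _ := h3
  -- hence the separation radius is at least F/2
  have hsep : F / 2 ≤ sepRad (design x n) := by
    unfold sepRad
    rw [div_eq_inv_mul, ← one_div]
    have : F ≤ sInf ((fun p : E × E => dist p.1 p.2) ''
        {p | p.1 ∈ design x n ∧ p.2 ∈ design x n ∧ p.1 ≠ p.2}) := by
      apply le_csInf
      · refine ⟨dist (x 0) (x 1), ⟨(x 0, x 1), ⟨mem_design x (by omega),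
          mem_design x (by omega), fun h => by exact absurd (hinj h) (by omega)⟩, rfl⟩⟩
      · rintro r ⟨⟨p, q⟩, ⟨hp, hq, hpq⟩, rfl⟩
        classical
        simp only [design, Finset.mem_image, Finset.mem_range] at hp hq
        obtain ⟨i, hi, rfl⟩ := hp
        obtain ⟨j, hj, rfl⟩ := hq
        have hij : i ≠ j := fun h => hpq (by rw [h])
        show F ≤ dist (x i) (x j)
        rcases lt_or_gt_of_ne hij with h | h
        · exact hkey i j h hj
        · rw [dist_comm]; exact hkey j i h hi
    nlinarith
  have hF0 : 0 ≤ F := fillDist_nonneg S _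
  unfold meshRatio
  rw [← hF]
  rcases le_or_gt (sepRad (design x n)) 0 with h | h
  · have hFz : F = 0 := le_antisymm (by linarith) hF0
    simp [hFz]
  · rw [div_le_iff₀ h]; linarith
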